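/- For every compact subset K of the prequential space Π, the upper game-theoretic probability equals the upper measure-theoretic probability: UpProb(K) = UpProbMeas(K). -/

import Mathlib

open Filter Topology MeasureTheory
open scoped ENNReal NNReal unitInterval

noncomputable section

/-- Finite prequential sequences: finite sequences of pairs (p, y) with p ∈ [0,1], y ∈ {0,1}. -/
abbrev PreqFin := List (unitInterval × Bool)

/-- The prequential space Π = ([0,1] × {0,1})^∞. -/
abbrev PreqInf := ℕ → unitInterval × Bool

/-- The length-n prefix π^n of π ∈ Π. -/
def prefixn (π : PreqInf) (n : ℕ) : PreqFin := List.ofFn fun i : Fin n => π i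

/-- A non-negative farthingale (values in [0,∞], with the convention 0·∞ = 0):
V(x) = (1-p)·V(x,p,0) + p·V(x,p,1). -/
def IsFarthingale (V : PreqFin → ℝ≥0∞) : Prop :=
  ∀ (x : PreqFin) (p : unitInterval),
    V x = ENNReal.ofReal (1 - (p : ℝ)) * V (x ++ [(p, false)])
        + ENNReal.ofReal (p : ℝ) * V (x ++ [(p, true)])

/-- Upper game-theoretic probability of a prequential event E ⊆ Π. -/
def UpProb (E : Set PreqInf) : ℝ≥0∞ :=
  sInf {a | ∃ V : PreqFin → ℝ≥0∞, IsFarthingale V ∧ V [] = a ∧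
    ∀ π ∈ E, 1 ≤ Filter.limsup (fun n => V (prefixn π n)) Filter.atTop}

/-- Ω = {0,1}^∞. -/
abbrev BinSeq := ℕ → Bool

/-- The length-n prefix ω^n of ω ∈ Ω. -/
def bprefix (ω : BinSeq) (n : ℕ) : List Bool := List.ofFn fun i : Fin n => ω i

/-- Γ(x): the set of infinite extensions of the finite binary sequence x. -/
def cyl (x : List Bool) : Set BinSeq := {ω | bprefix ω x.length = x}

/-- A forecasting system is a function φ : Ω◇ → [0,1]. -/
abbrev ForecastingSystem := List Bool → unitInterval

/-- μ is the probability measure Prob_φ induced by the forecasting system φ: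
Prob_φ(Γ(x1)) = φ(x)·Prob_φ(Γ(x)). -/
def IsForecastMeasure (φ : ForecastingSystem) (μ : Measure BinSeq) : Prop :=
  IsProbabilityMeasure μ ∧
    ∀ x : List Bool, μ (cyl (x ++ [true])) = ENNReal.ofReal (φ x : ℝ) * μ (cyl x)

/-- ω^φ ∈ Π: the interleaving of the forecasts produced by φ with the outcomes of ω. -/
def seqPhi (φ : ForecastingSystem) (ω : BinSeq) : PreqInf :=
  fun n => (φ (bprefix ω n), ω n)

/-- Upper measure-theoretic probability of a prequential event E ⊆ Π
(the measure, coerced to an outer measure, is applied to the possibly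
non-measurable set {ω : ω^φ ∈ E}). -/
def UpProbMeas (E : Set PreqInf) : ℝ≥0∞ :=
  ⨆ (φ : ForecastingSystem) (μ : Measure BinSeq) (_ : IsForecastMeasure φ μ),
    μ {ω | seqPhi φ ω ∈ E}

namespace PreqProof

/-! ### basic list lemmas -/

lemma length_prefixn (π : PreqInf) (n : ℕ) : (prefixn π n).length = n := by
  simp [prefixn]

lemma length_bprefix (ω : BinSeq) (n : ℕ) : (bprefix ω n).length = n := by
  simp [bprefix]

lemma prefixn_succ (π : PreqInf) (n : ℕ) : prefixn π (n+1) = prefixn π n ++ [π n] := by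
  rw [prefixn, List.ofFn_succ', List.concat_eq_append]
  simp [prefixn]

lemma bprefix_succ (ω : BinSeq) (n : ℕ) : bprefix ω (n+1) = bprefix ω n ++ [ω n] := by
  rw [bprefix, List.ofFn_succ', List.concat_eq_append]
  simp [bprefix]

lemma getElem_prefixn (π : PreqInf) (n i : ℕ) (h : i < (prefixn π n).length) :
    (prefixn π n)[i] = π i := by
  simp [prefixn]

lemma getElem_bprefix (ω : BinSeq) (n i : ℕ) (h : i < (bprefix ω n).length) :
    (bprefix ω n)[i] = ω i := by
  simp [bprefix]

lemma take_prefixn (π : PreqInf) {m n : ℕ} (h : m ≤ n) :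
    (prefixn π n).take m = prefixn π m := by
  apply List.ext_getElem
  · simp [prefixn, Nat.min_eq_left h]
  · intro i h1 h2
    simp [prefixn]

lemma take_bprefix (ω : BinSeq) {m n : ℕ} (h : m ≤ n) :
    (bprefix ω n).take m = bprefix ω m := by
  apply List.ext_getElem
  · simp [bprefix, Nat.min_eq_left h]
  · intro i h1 h2
    simp [bprefix]

lemma mem_cyl {x : List Bool} {ω : BinSeq} :
    ω ∈ cyl x ↔ ∀ i (h : i < x.length), ω i = x[i] := by
  constructor
  · intro hω i h
    have hx : bprefix ω x.length = x := hω
    have h2 : i < (bprefix ω x.length).length := by simpa [length_bprefix] using h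
    calc ω i = (bprefix ω x.length)[i] := by simp [bprefix]
      _ = x[i] := List.getElem_of_eq hx h2
  · intro h
    simp only [cyl, Set.mem_setOf_eq]
    apply List.ext_getElem (by simp [bprefix])
    intro i h1 h2
    simpa [bprefix] using h i h2

lemma measurableSet_cyl (x : List Bool) : MeasurableSet (cyl x) := by
  have : cyl x = ⋂ (i : Fin x.length), {ω : BinSeq | ω i = x[i]} := by
    ext ω
    simp only [Set.mem_iInter, Set.mem_setOf_eq, mem_cyl]
    exact ⟨fun h i => h i i.2, fun h i hi => h ⟨i, hi⟩⟩
  rw [this]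
  exact MeasurableSet.iInter fun i =>
    (measurable_pi_apply (i : ℕ)) (MeasurableSet.singleton _)

lemma cyl_nil : cyl ([] : List Bool) = Set.univ := by
  ext ω; simp [cyl, bprefix]

lemma mem_cyl_snoc {x : List Bool} {b : Bool} {ω : BinSeq} :
    ω ∈ cyl (x ++ [b]) ↔ ω ∈ cyl x ∧ ω x.length = b := by
  simp only [cyl, Set.mem_setOf_eq, List.length_append, List.length_cons,
    List.length_nil, Nat.zero_add, bprefix_succ]
  constructor
  · intro h
    have := List.append_inj h (by simp [length_bprefix])
    simpa using this
  · rintro ⟨h1, h2⟩; rw [h1, h2]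

lemma cyl_eq_union (x : List Bool) :
    cyl x = cyl (x ++ [false]) ∪ cyl (x ++ [true]) := by
  ext ω
  simp only [Set.mem_union, mem_cyl_snoc]
  rcases Bool.dichotomy (ω x.length) with h | h
  · tauto
  · tauto

lemma disjoint_cyl_snoc (x : List Bool) :
    Disjoint (cyl (x ++ [false])) (cyl (x ++ [true])) := by
  rw [Set.disjoint_iff]
  rintro ω ⟨h1, h2⟩
  rw [mem_cyl_snoc] at h1 h2
  rw [h1.2] at h2
  exact absurd h2.2 (by simp)

/-! ### step probabilities -/

def pstep (φ : ForecastingSystem) (x : List Bool) (b : Bool) : ℝ≥0∞ :=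
  if b then ENNReal.ofReal (φ x : ℝ) else ENNReal.ofReal (1 - (φ x : ℝ))

lemma pstep_le_one (φ : ForecastingSystem) (x : List Bool) (b : Bool) :
    pstep φ x b ≤ 1 := by
  rcases b with _ | _ <;> simp [pstep, ENNReal.ofReal_le_one]
  · linarith [(φ x).2.1]
  · exact (φ x).2.2

lemma pstep_add (φ : ForecastingSystem) (x : List Bool) :
    pstep φ x false + pstep φ x true = 1 := by
  simp only [pstep, if_true, if_false, Bool.false_eq_true]
  rw [← ENNReal.ofReal_add (by linarith [(φ x).2.2]) (φ x).2.1]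
  norm_num

lemma ofReal_unit_add (p : unitInterval) :
    ENNReal.ofReal (1 - (p:ℝ)) + ENNReal.ofReal (p:ℝ) = 1 := by
  rw [← ENNReal.ofReal_add (by linarith [p.2.2]) p.2.1]
  norm_num

/-! ### finite binary strings and sums -/

def allBin : ℕ → Finset (List Bool)
  | 0 => {[]}
  | n+1 => ((allBin n) ×ˢ (Finset.univ : Finset Bool)).image fun q => q.1 ++ [q.2]

lemma mem_allBin {n : ℕ} {x : List Bool} : x ∈ allBin n ↔ x.length = n := by
  induction n generalizing x with
  | zero => simp [allBin, List.length_eq_zero_iff]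
  | succ n ih =>
    simp only [allBin, Finset.mem_image, Finset.mem_product, Finset.mem_univ, and_true]
    constructor
    · rintro ⟨⟨y, b⟩, hy, rfl⟩
      simp [ih.1 hy]
    · intro hx
      have hne : x ≠ [] := by intro h; rw [h] at hx; simp at hx
      refine ⟨⟨x.dropLast, x.getLast hne⟩, ?_, ?_⟩
      · exact ih.2 (by simp [hx])
      · exact List.dropLast_append_getLast hne

lemma sum_split (n : ℕ) (F : List Bool → ℝ≥0∞) :
    ∑ x ∈ allBin (n+1), F x = ∑ x ∈ allBin n, (F (x ++ [false]) + F (x ++ [true])) := by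
  rw [allBin, Finset.sum_image]
  · rw [Finset.sum_product]
    apply Finset.sum_congr rfl
    intro x _
    simp [add_comm]
  · rintro ⟨y, b⟩ hy ⟨z, c⟩ hz h
    simp only [Finset.mem_coe, Finset.mem_product, Finset.mem_univ, and_true] at hy hz
    have hlen : y.length = z.length := by
      rw [mem_allBin] at hy hz; rw [hy, hz]
    obtain ⟨h1, h2⟩ := List.append_inj h hlen
    simp only at h1
    simp only [List.cons.injEq, and_true] at h2
    simp [h1, h2]

/-! ### product probabilities -/

def P (φ : ForecastingSystem) (x : List Bool) : ℝ≥0∞ :=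
  ∏ i ∈ Finset.range x.length, pstep φ (x.take i) (x.getD i false)

@[simp] lemma P_nil (φ : ForecastingSystem) : P φ [] = 1 := by simp [P]

lemma P_snoc (φ : ForecastingSystem) (x : List Bool) (b : Bool) :
    P φ (x ++ [b]) = P φ x * pstep φ x b := by
  rw [P, P]
  have hlen : (x ++ [b]).length = x.length + 1 := by simp
  rw [hlen, Finset.prod_range_succ]
  congr 1
  · apply Finset.prod_congr rfl
    intro i hi
    rw [Finset.mem_range] at hi
    rw [List.take_append_of_le_length (le_of_lt hi), List.getD_append _ _ _ _ hi]
  · rw [List.take_left, List.getD_append_right x [b] false x.length (le_refl _)]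
    simp

lemma P_le_one (φ : ForecastingSystem) (x : List Bool) : P φ x ≤ 1 :=
  Finset.prod_le_one (fun _ _ => zero_le) (fun i _ => pstep_le_one φ _ _)

lemma P_ne_top (φ : ForecastingSystem) (x : List Bool) : P φ x ≠ ∞ :=
  ne_top_of_le_ne_top ENNReal.one_ne_top (P_le_one φ x)

/-! ### cylinder measures of a forecast measure -/

variable {φ : ForecastingSystem} {μ : Measure BinSeq}

lemma fm_cyl_le_one (hm : IsForecastMeasure φ μ) (x : List Bool) : μ (cyl x) ≤ 1 := by
  haveI := hm.1
  exact prob_le_one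

lemma fm_cyl_ne_top (hm : IsForecastMeasure φ μ) (x : List Bool) : μ (cyl x) ≠ ∞ :=
  ne_top_of_le_ne_top ENNReal.one_ne_top (fm_cyl_le_one hm x)

lemma fm_cyl_union (hm : IsForecastMeasure φ μ) (x : List Bool) :
    μ (cyl x) = μ (cyl (x ++ [false])) + μ (cyl (x ++ [true])) := by
  rw [cyl_eq_union x]
  exact measure_union (disjoint_cyl_snoc x) (measurableSet_cyl _)

lemma fm_cyl_snoc (hm : IsForecastMeasure φ μ) (x : List Bool) (b : Bool) :
    μ (cyl (x ++ [b])) = pstep φ x b * μ (cyl x) := by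
  rcases b with _ | _
  · -- false case
    have ht : pstep φ x true * μ (cyl x) ≠ ∞ :=
      ne_top_of_le_ne_top (fm_cyl_ne_top hm x)
        (mul_le_of_le_one_left zero_le (pstep_le_one φ x true))
    have hmt : μ (cyl (x ++ [true])) = pstep φ x true * μ (cyl x) := by
      rw [hm.2 x]; simp [pstep]
    have h1 : μ (cyl (x ++ [false])) + pstep φ x true * μ (cyl x)
        = pstep φ x false * μ (cyl x) + pstep φ x true * μ (cyl x) := by
      rw [← add_mul, pstep_add, one_mul, ← hmt]
      exact (fm_cyl_union hm x).symm
    exact WithTop.add_right_cancel ht h1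
  · rw [hm.2 x]; simp [pstep]

lemma fm_cyl_eq_P (hm : IsForecastMeasure φ μ) (x : List Bool) :
    μ (cyl x) = P φ x := by
  induction x using List.reverseRecOn with
  | nil =>
    haveI := hm.1
    simp [cyl_nil]
  | append_singleton y b ih =>
    rw [fm_cyl_snoc hm, ih, P_snoc, mul_comm]

open scoped Classical

/-! ### the prequential path of a binary string -/

def preq (φ : ForecastingSystem) (x : List Bool) : PreqFin :=
  List.ofFn fun i : Fin x.length => (φ (x.take i), x[(i : ℕ)]'(i.isLt))

@[simp] lemma preq_nil (φ : ForecastingSystem) : preq φ [] = [] := by simp [preq]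

@[simp] lemma length_preq (φ : ForecastingSystem) (x : List Bool) :
    (preq φ x).length = x.length := by simp [preq]

lemma preq_snoc (φ : ForecastingSystem) (x : List Bool) (b : Bool) :
    preq φ (x ++ [b]) = preq φ x ++ [(φ x, b)] := by
  apply List.ext_getElem
  · simp [preq]
  · intro i h1 h2
    rcases Nat.lt_or_ge i x.length with h | h
    · rw [List.getElem_append_left (show i < (preq φ x).length by simpa using h)]
      simp only [preq, List.getElem_ofFn]
      congr 1
      · rw [List.take_append_of_le_length h.le]
      · rw [List.getElem_append_left h]
    · have hi : i = x.length := by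
        have : i < x.length + 1 := by simpa [preq] using h2
        omega
      subst hi
      rw [List.getElem_append_right (show (preq φ x).length ≤ x.length by simp)]
      simp only [preq, List.getElem_ofFn, length_preq, Nat.sub_self, List.getElem_cons_zero,
        List.getElem_singleton]
      congr 1
      · rw [List.take_left]
      · exact List.getElem_concat_length rfl (by simp)

lemma take_preq (φ : ForecastingSystem) (x : List Bool) (m : ℕ) (hm : m ≤ x.length) :
    (preq φ x).take m = preq φ (x.take m) := by
  apply List.ext_getElem
  · simp [preq, Nat.min_eq_left, hm]
  · intro i h1 h2
    have hi : i < m := by simpa [preq, Nat.min_eq_left hm] using h1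
    have hix : i < x.length := lt_of_lt_of_le hi hm
    rw [List.getElem_take]
    simp only [preq, List.getElem_ofFn]
    congr 1
    · rw [List.take_take, Nat.min_eq_left hi.le]
    · exact (List.getElem_take).symm

lemma preq_bprefix (φ : ForecastingSystem) (ω : BinSeq) (n : ℕ) :
    prefixn (seqPhi φ ω) n = preq φ (bprefix ω n) := by
  apply List.ext_getElem
  · simp [prefixn, preq, length_bprefix]
  · intro i h1 h2
    have hi : i < n := by simpa [prefixn] using h1
    simp only [prefixn, preq, List.getElem_ofFn, seqPhi]
    congr 1
    · rw [take_bprefix ω hi.le]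
    · exact (getElem_bprefix ω n i (by simpa [length_bprefix] using hi)).symm

/-! ### martingale sum and Ville's inequality -/

lemma fm_sum_V {φ : ForecastingSystem} {μ : Measure BinSeq} (hm : IsForecastMeasure φ μ)
    (V : PreqFin → ℝ≥0∞) (hV : IsFarthingale V) (n : ℕ) :
    ∑ x ∈ allBin n, μ (cyl x) * V (preq φ x) = V [] := by
  induction n with
  | zero =>
    haveI := hm.1
    simp [allBin, cyl_nil]
  | succ n ih =>
    rw [sum_split, ← ih]
    apply Finset.sum_congr rfl
    intro x _
    rw [preq_snoc, preq_snoc, fm_cyl_snoc hm, fm_cyl_snoc hm]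
    rw [hV (preq φ x) (φ x)]
    simp only [pstep, if_true, if_false, Bool.false_eq_true]
    ring

/-- the farthingale stopped at level c -/
def stopV (V : PreqFin → ℝ≥0∞) (c : ℝ≥0∞) (y : PreqFin) : ℝ≥0∞ :=
  if h : ∃ m, m ≤ y.length ∧ c ≤ V (y.take m) then V (y.take (Nat.find h)) else V y

lemma stopV_nil (V : PreqFin → ℝ≥0∞) (c : ℝ≥0∞) : stopV V c [] = V [] := by
  rw [stopV]
  split_ifs with h
  · simp
  · rfl

lemma stopV_snoc_of_hit {V : PreqFin → ℝ≥0∞} {c : ℝ≥0∞} {x : PreqFin}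
    (h : ∃ m, m ≤ x.length ∧ c ≤ V (x.take m)) (e : unitInterval × Bool) :
    stopV V c (x ++ [e]) = stopV V c x := by
  have h' : ∃ m, m ≤ (x ++ [e]).length ∧ c ≤ V ((x ++ [e]).take m) := by
    obtain ⟨m, hm1, hm2⟩ := h
    exact ⟨m, le_trans hm1 (by simp), by rwa [List.take_append_of_le_length hm1]⟩
  rw [stopV, stopV, dif_pos h, dif_pos h']
  have key : Nat.find h' = Nat.find h := by
    apply le_antisymm
    · obtain ⟨hm1, hm2⟩ := Nat.find_spec h
      apply Nat.find_le
      exact ⟨le_trans hm1 (by simp), by rwa [List.take_append_of_le_length hm1]⟩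
    · obtain ⟨hm1, hm2⟩ := Nat.find_spec h'
      have hle : Nat.find h' ≤ x.length := by
        by_contra hc
        push_neg at hc
        have hlen : (x ++ [e]).length = x.length + 1 := by simp
        obtain ⟨m, hma, hmb⟩ := h
        have := Nat.find_min h' (show m < Nat.find h' by omega)
        exact this ⟨le_trans hma (by simp), by rwa [List.take_append_of_le_length hma]⟩
      apply Nat.find_le
      exact ⟨hle, by rwa [List.take_append_of_le_length hle] at hm2⟩
  rw [key, List.take_append_of_le_length (Nat.find_spec h).1]

lemma stopV_eq_of_nohit {V : PreqFin → ℝ≥0∞} {c : ℝ≥0∞} {y : PreqFin}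
    (h : ¬ ∃ m, m < y.length ∧ c ≤ V (y.take m)) :
    stopV V c y = V y := by
  rw [stopV]
  split_ifs with h'
  · have : Nat.find h' = y.length := by
      obtain ⟨hm1, hm2⟩ := Nat.find_spec h'
      rcases Nat.lt_or_ge (Nat.find h') y.length with hc | hc
      · exact absurd ⟨Nat.find h', hc, hm2⟩ h
      · omega
    rw [this, List.take_length]
  · rfl

lemma isFarthingale_stopV (V : PreqFin → ℝ≥0∞) (hV : IsFarthingale V) (c : ℝ≥0∞) :
    IsFarthingale (stopV V c) := by
  intro x p
  by_cases h : ∃ m, m ≤ x.length ∧ c ≤ V (x.take m)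
  · rw [stopV_snoc_of_hit h, stopV_snoc_of_hit h, ← add_mul, ofReal_unit_add, one_mul]
  · have hx : stopV V c x = V x := by
      apply stopV_eq_of_nohit
      rintro ⟨m, hm1, hm2⟩
      exact h ⟨m, hm1.le, hm2⟩
    have hc0 : ∀ b : Bool, stopV V c (x ++ [(p, b)]) = V (x ++ [(p, b)]) := by
      intro b
      apply stopV_eq_of_nohit
      rintro ⟨m, hm1, hm2⟩
      have hm1' : m ≤ x.length := by simpa using Nat.lt_succ_iff.mp (by simpa using hm1)
      rw [List.take_append_of_le_length hm1'] at hm2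
      exact h ⟨m, hm1', hm2⟩
    rw [hx, hc0, hc0]
    exact hV x p

lemma c_le_stopV {V : PreqFin → ℝ≥0∞} {c : ℝ≥0∞} {y : PreqFin}
    (h : ∃ m, m ≤ y.length ∧ c ≤ V (y.take m)) : c ≤ stopV V c y := by
  rw [stopV, dif_pos h]
  exact (Nat.find_spec h).2

/-- the hitting sets -/
def hitSet (φ : ForecastingSystem) (V : PreqFin → ℝ≥0∞) (c : ℝ≥0∞) (n : ℕ) : Set BinSeq :=
  {ω | ∃ m, m ≤ n ∧ c ≤ V (preq φ (bprefix ω m))}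

lemma hitSet_eq (φ : ForecastingSystem) (V : PreqFin → ℝ≥0∞) (c : ℝ≥0∞) (n : ℕ) :
    hitSet φ V c n =
      ⋃ x ∈ (allBin n).filter (fun x => ∃ m, m ≤ n ∧ c ≤ V (preq φ (x.take m))), cyl x := by
  ext ω
  simp only [hitSet, Set.mem_setOf_eq, Set.mem_iUnion, Finset.mem_filter, exists_prop]
  constructor
  · rintro ⟨m, hm1, hm2⟩
    refine ⟨bprefix ω n, ⟨mem_allBin.2 (length_bprefix ω n), m, hm1, ?_⟩, ?_⟩
    · rwa [take_bprefix ω hm1]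
    · show bprefix ω (bprefix ω n).length = bprefix ω n
      rw [length_bprefix]
  · rintro ⟨x, ⟨hx, m, hm1, hm2⟩, hω⟩
    have hxn : x.length = n := mem_allBin.1 hx
    have hbx : bprefix ω n = x := by
      have : bprefix ω x.length = x := hω
      rwa [hxn] at this
    refine ⟨m, hm1, ?_⟩
    rw [← take_bprefix ω (show m ≤ n by omega), hbx]
    exact hm2

lemma measurableSet_hitSet (φ : ForecastingSystem) (V : PreqFin → ℝ≥0∞) (c : ℝ≥0∞) (n : ℕ) :
    MeasurableSet (hitSet φ V c n) := by
  rw [hitSet_eq]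
  exact (Finset.measurableSet_biUnion _ fun x _ => measurableSet_cyl x)

lemma ville_bound {φ : ForecastingSystem} {μ : Measure BinSeq} (hm : IsForecastMeasure φ μ)
    (V : PreqFin → ℝ≥0∞) (hV : IsFarthingale V) (c : ℝ≥0∞) (n : ℕ) :
    c * μ (hitSet φ V c n) ≤ V [] := by
  have key : ∑ x ∈ allBin n, μ (cyl x) * stopV V c (preq φ x) = V [] := by
    rw [fm_sum_V hm _ (isFarthingale_stopV V hV c) n, stopV_nil]
  rw [hitSet_eq]
  calc c * μ (⋃ x ∈ (allBin n).filter _, cyl x)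
      ≤ c * ∑ x ∈ (allBin n).filter (fun x => ∃ m, m ≤ n ∧ c ≤ V (preq φ (x.take m))), μ (cyl x) := by
        exact mul_le_mul_right (measure_biUnion_finset_le _ _) c
    _ = ∑ x ∈ (allBin n).filter (fun x => ∃ m, m ≤ n ∧ c ≤ V (preq φ (x.take m))), c * μ (cyl x) := by
        rw [Finset.mul_sum]
    _ ≤ ∑ x ∈ (allBin n).filter (fun x => ∃ m, m ≤ n ∧ c ≤ V (preq φ (x.take m))),
          μ (cyl x) * stopV V c (preq φ x) := by
        apply Finset.sum_le_sum
        intro x hx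
        obtain ⟨hx1, m, hm1, hm2⟩ := Finset.mem_filter.1 hx
        have hxn : x.length = n := mem_allBin.1 hx1
        have : c ≤ stopV V c (preq φ x) := by
          apply c_le_stopV
          refine ⟨m, by rw [length_preq]; omega, ?_⟩
          rwa [take_preq φ x m (by omega)]
        calc c * μ (cyl x) = μ (cyl x) * c := mul_comm _ _
          _ ≤ μ (cyl x) * stopV V c (preq φ x) := mul_le_mul_right this _
    _ ≤ ∑ x ∈ allBin n, μ (cyl x) * stopV V c (preq φ x) :=
        Finset.sum_le_sum_of_subset (Finset.filter_subset _ _)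
    _ = V [] := key

theorem upProbMeas_le_upProb (E : Set PreqInf) : UpProbMeas E ≤ UpProb E := by
  apply iSup_le; intro φ
  apply iSup_le; intro μ
  apply iSup_le; intro hm
  apply le_sInf
  rintro a ⟨V, hV, rfl, hlim⟩
  apply ENNReal.le_of_forall_lt_one_mul_le
  intro c hc
  have hsub : {ω | seqPhi φ ω ∈ E} ⊆ ⋃ n, hitSet φ V c n := by
    intro ω hω
    have h1 := hlim _ hω
    by_contra hno
    have hall : ∀ m : ℕ, V (preq φ (bprefix ω m)) < c := by
      intro m
      by_contra hcc
      push_neg at hcc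
      exact hno (Set.mem_iUnion.2 ⟨m, ⟨m, le_refl m, hcc⟩⟩)
    have : Filter.limsup (fun n => V (prefixn (seqPhi φ ω) n)) Filter.atTop ≤ c := by
      refine limsup_le_of_le (by isBoundedDefault) ?_
      filter_upwards with n
      rw [preq_bprefix]
      exact (hall n).le
    exact absurd (lt_of_lt_of_le hc (le_trans h1 this)) (lt_irrefl _)
  calc c * μ {ω | seqPhi φ ω ∈ E} ≤ c * μ (⋃ n, hitSet φ V c n) :=
        mul_le_mul_right (measure_mono hsub) c
    _ = c * ⨆ n, μ (hitSet φ V c n) := by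
        rw [Directed.measure_iUnion]
        apply Monotone.directed_le
        intro m n hmn ω
        rintro ⟨k, hk1, hk2⟩
        exact ⟨k, le_trans hk1 hmn, hk2⟩
    _ = ⨆ n, c * μ (hitSet φ V c n) := ENNReal.mul_iSup c _
    _ ≤ V [] := iSup_le fun n => ville_bound hm V hV c n

/-! ### the finite-horizon game value -/

def brk (W : PreqFin → ℝ≥0∞) (x : PreqFin) (p : unitInterval) : ℝ≥0∞ :=
  ENNReal.ofReal (1 - (p : ℝ)) * W (x ++ [(p, false)]) + ENNReal.ofReal (p : ℝ) * W (x ++ [(p, true)])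

def termInd (K : Set PreqInf) (N : ℕ) (x : PreqFin) : ℝ≥0∞ :=
  if ∃ π ∈ K, prefixn π N = x.take N then 1 else 0

def w (K : Set PreqInf) (N : ℕ) : ℕ → PreqFin → ℝ≥0∞
  | 0, x => termInd K N x
  | k+1, x => ⨆ p : unitInterval, brk (w K N k) x p

lemma termInd_le_one (K : Set PreqInf) (N : ℕ) (x : PreqFin) : termInd K N x ≤ 1 := by
  rw [termInd]; split_ifs <;> simp

lemma brk_le_one {W : PreqFin → ℝ≥0∞} (hW : ∀ y, W y ≤ 1) (x : PreqFin) (p : unitInterval) :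
    brk W x p ≤ 1 := by
  calc brk W x p ≤ ENNReal.ofReal (1 - (p : ℝ)) * 1 + ENNReal.ofReal (p : ℝ) * 1 := by
        exact add_le_add (mul_le_mul_right (hW _) _) (mul_le_mul_right (hW _) _)
    _ = 1 := by rw [mul_one, mul_one, ofReal_unit_add]

lemma w_le_one (K : Set PreqInf) (N k : ℕ) (x : PreqFin) : w K N k x ≤ 1 := by
  induction k generalizing x with
  | zero => exact termInd_le_one K N x
  | succ k ih => exact iSup_le fun p => brk_le_one ih x p

lemma w_ne_top (K : Set PreqInf) (N k : ℕ) (x : PreqFin) : w K N k x ≠ ∞ :=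
  ne_top_of_le_ne_top ENNReal.one_ne_top (w_le_one K N k x)

def vfun (K : Set PreqInf) (N : ℕ) (x : PreqFin) : ℝ≥0∞ := w K N (N - x.length) x

lemma vfun_le_one (K : Set PreqInf) (N : ℕ) (x : PreqFin) : vfun K N x ≤ 1 := w_le_one _ _ _ _

lemma vfun_of_long {K : Set PreqInf} {N : ℕ} {x : PreqFin} (h : N ≤ x.length) :
    vfun K N x = termInd K N x := by
  rw [vfun, Nat.sub_eq_zero_of_le h, w]

lemma termInd_snoc {K : Set PreqInf} {N : ℕ} {x : PreqFin} (h : N ≤ x.length)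
    (e : unitInterval × Bool) : termInd K N (x ++ [e]) = termInd K N x := by
  rw [termInd, termInd, List.take_append_of_le_length h]

lemma brk_vfun_of_long {K : Set PreqInf} {N : ℕ} {x : PreqFin} (h : N ≤ x.length)
    (p : unitInterval) : brk (vfun K N) x p = vfun K N x := by
  have h1 : ∀ b : Bool, vfun K N (x ++ [(p, b)]) = vfun K N x := by
    intro b
    rw [vfun_of_long (by simp; omega), vfun_of_long h, termInd_snoc h]
  rw [brk, h1, h1, ← add_mul, ofReal_unit_add, one_mul]

lemma brk_vfun_le {K : Set PreqInf} {N : ℕ} (x : PreqFin) (p : unitInterval) :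
    brk (vfun K N) x p ≤ vfun K N x := by
  rcases Nat.lt_or_ge x.length N with h | h
  · have hk : N - x.length = (N - x.length - 1) + 1 := by omega
    have hc : ∀ b : Bool, vfun K N (x ++ [(p, b)]) = w K N (N - x.length - 1) (x ++ [(p, b)]) := by
      intro b
      rw [vfun]
      congr 1
      simp; omega
    rw [vfun, hk, w]
    refine le_trans (le_of_eq ?_) (le_iSup _ p)
    rw [brk, brk, hc, hc]
  · exact le_of_eq (brk_vfun_of_long h p)

lemma brk_vfun_ne_top {K : Set PreqInf} {N : ℕ} (x : PreqFin) (p : unitInterval) :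
    brk (vfun K N) x p ≠ ∞ :=
  ne_top_of_le_ne_top ENNReal.one_ne_top (brk_le_one (vfun_le_one K N) x p)

/-! ### construction of a near-optimal farthingale -/

def Vrev (K : Set PreqInf) (N : ℕ) (base : ℝ≥0∞) : List (unitInterval × Bool) → ℝ≥0∞
  | [] => base
  | e :: r => vfun K N (r.reverse ++ [e]) + (Vrev K N base r - brk (vfun K N) r.reverse e.1)

def VV (K : Set PreqInf) (N : ℕ) (base : ℝ≥0∞) (x : PreqFin) : ℝ≥0∞ :=
  Vrev K N base x.reverse

@[simp] lemma VV_nil (K : Set PreqInf) (N : ℕ) (base : ℝ≥0∞) : VV K N base [] = base := rfl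

lemma VV_snoc (K : Set PreqInf) (N : ℕ) (base : ℝ≥0∞) (x : PreqFin) (e : unitInterval × Bool) :
    VV K N base (x ++ [e]) = vfun K N (x ++ [e]) + (VV K N base x - brk (vfun K N) x e.1) := by
  rw [VV, List.reverse_append, List.reverse_singleton, List.singleton_append, Vrev,
    List.reverse_reverse]
  rfl

lemma vfun_le_VV {K : Set PreqInf} {N : ℕ} {base : ℝ≥0∞} (hbase : vfun K N [] ≤ base)
    (x : PreqFin) : vfun K N x ≤ VV K N base x := by
  induction x using List.reverseRecOn with
  | nil => simpa using hbase
  | append_singleton y e ih => rw [VV_snoc]; exact le_self_add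

lemma isFarthingale_VV {K : Set PreqInf} {N : ℕ} {base : ℝ≥0∞} (hbase : vfun K N [] ≤ base) :
    IsFarthingale (VV K N base) := by
  intro x p
  have h0 : VV K N base (x ++ [(p, false)])
      = vfun K N (x ++ [(p, false)]) + (VV K N base x - brk (vfun K N) x p) := VV_snoc K N base x _
  have h1 : VV K N base (x ++ [(p, true)])
      = vfun K N (x ++ [(p, true)]) + (VV K N base x - brk (vfun K N) x p) := VV_snoc K N base x _
  rw [h0, h1, mul_add, mul_add]
  have : ENNReal.ofReal (1 - (p : ℝ)) * vfun K N (x ++ [(p, false)]) +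
        ENNReal.ofReal (1 - (p : ℝ)) * (VV K N base x - brk (vfun K N) x p) +
        (ENNReal.ofReal (p : ℝ) * vfun K N (x ++ [(p, true)]) +
          ENNReal.ofReal (p : ℝ) * (VV K N base x - brk (vfun K N) x p))
      = brk (vfun K N) x p +
        (ENNReal.ofReal (1 - (p : ℝ)) + ENNReal.ofReal (p : ℝ)) * (VV K N base x - brk (vfun K N) x p) := by
    rw [brk]; ring
  rw [this, ofReal_unit_add, one_mul,
    add_tsub_cancel_of_le (le_trans (brk_vfun_le x p) (vfun_le_VV hbase x))]

lemma VV_snoc_of_long {K : Set PreqInf} {N : ℕ} {base : ℝ≥0∞} (hbase : vfun K N [] ≤ base)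
    {x : PreqFin} (h : N ≤ x.length) (e : unitInterval × Bool) :
    VV K N base (x ++ [e]) = VV K N base x := by
  rw [VV_snoc, brk_vfun_of_long h, vfun_of_long (show N ≤ (x ++ [e]).length by simp; omega),
    termInd_snoc h, ← vfun_of_long h, add_tsub_cancel_of_le (vfun_le_VV hbase x)]

lemma VV_prefixn_const {K : Set PreqInf} {N : ℕ} {base : ℝ≥0∞} (hbase : vfun K N [] ≤ base)
    (π : PreqInf) {n : ℕ} (h : N ≤ n) :
    VV K N base (prefixn π n) = VV K N base (prefixn π N) := by
  induction n with
  | zero =>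
    have : N = 0 := by omega
    rw [this]
  | succ n ih =>
    rcases Nat.lt_or_ge n N with h2 | h2
    · have : N = n + 1 := by omega
      rw [this]
    · rw [prefixn_succ, VV_snoc_of_long hbase (by rw [length_prefixn]; exact h2), ih h2]

lemma upProb_le_w (K : Set PreqInf) (N : ℕ) (ε : ℝ≥0∞) :
    UpProb K ≤ w K N N [] + ε := by
  have hbase : vfun K N [] ≤ w K N N [] + ε := by
    rw [vfun]
    simp only [List.length_nil, Nat.sub_zero]
    exact le_self_add
  apply sInf_le
  refine ⟨VV K N (w K N N [] + ε), isFarthingale_VV hbase, VV_nil K N _, ?_⟩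
  intro π hπ
  refine Filter.le_limsup_of_frequently_le ?_ (by isBoundedDefault)
  apply Filter.Eventually.frequently
  filter_upwards [Filter.eventually_ge_atTop N] with n hn
  rw [VV_prefixn_const hbase π hn]
  refine le_trans ?_ (vfun_le_VV hbase _)
  rw [vfun_of_long (by rw [length_prefixn]), termInd]
  rw [if_pos ?_]
  refine ⟨π, hπ, ?_⟩
  rw [List.take_of_length_le (by rw [length_prefixn])]

/-! ### existence of the forecast measure -/

def lenR (φ : ForecastingSystem) (x : List Bool) : ℝ := (P φ x).toReal

def aL (φ : ForecastingSystem) (x : List Bool) : ℝ :=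
  ∑ i ∈ Finset.range x.length,
    if x.getD i false then lenR φ ((x.take i) ++ [false]) else 0

lemma lenR_nonneg (φ : ForecastingSystem) (x : List Bool) : 0 ≤ lenR φ x :=
  ENNReal.toReal_nonneg

lemma lenR_le_one (φ : ForecastingSystem) (x : List Bool) : lenR φ x ≤ 1 := by
  rw [lenR, ← ENNReal.toReal_one]
  exact ENNReal.toReal_mono ENNReal.one_ne_top (P_le_one φ x)

@[simp] lemma lenR_nil (φ : ForecastingSystem) : lenR φ [] = 1 := by simp [lenR]

@[simp] lemma aL_nil (φ : ForecastingSystem) : aL φ [] = 0 := by simp [aL]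

lemma P_split (φ : ForecastingSystem) (x : List Bool) :
    P φ x = P φ (x ++ [false]) + P φ (x ++ [true]) := by
  rw [P_snoc, P_snoc, ← mul_add, pstep_add, mul_one]

lemma lenR_split (φ : ForecastingSystem) (x : List Bool) :
    lenR φ x = lenR φ (x ++ [false]) + lenR φ (x ++ [true]) := by
  rw [lenR, lenR, lenR, P_split φ x, ENNReal.toReal_add (P_ne_top φ _) (P_ne_top φ _)]

lemma aL_snoc (φ : ForecastingSystem) (x : List Bool) (b : Bool) :
    aL φ (x ++ [b]) = aL φ x + if b then lenR φ (x ++ [false]) else 0 := by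
  rw [aL, aL]
  have hlen : (x ++ [b]).length = x.length + 1 := by simp
  rw [hlen, Finset.sum_range_succ]
  congr 1
  · apply Finset.sum_congr rfl
    intro i hi
    rw [Finset.mem_range] at hi
    rw [List.take_append_of_le_length (le_of_lt hi), List.getD_append _ _ _ _ hi]
  · rw [List.take_left, List.getD_append_right x [b] false x.length (le_refl _)]
    simp

/-- bit chosen at the node x for the point u -/
def bitC (φ : ForecastingSystem) (x : List Bool) (u : ℝ) : Bool :=
  decide (aL φ x + lenR φ (x ++ [false]) ≤ u)

def sseq (φ : ForecastingSystem) (u : ℝ) : ℕ → List Bool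
  | 0 => []
  | n+1 => sseq φ u n ++ [bitC φ (sseq φ u n) u]

def FF (φ : ForecastingSystem) (u : ℝ) : BinSeq := fun n => bitC φ (sseq φ u n) u

@[simp] lemma length_sseq (φ : ForecastingSystem) (u : ℝ) (n : ℕ) :
    (sseq φ u n).length = n := by
  induction n with
  | zero => rfl
  | succ n ih => simp [sseq, ih]

lemma bprefix_FF (φ : ForecastingSystem) (u : ℝ) (n : ℕ) :
    bprefix (FF φ u) n = sseq φ u n := by
  induction n with
  | zero => simp [bprefix, sseq]
  | succ n ih => rw [bprefix_succ, ih, sseq]; rfl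

lemma sseq_succ_eq_iff (φ : ForecastingSystem) (u : ℝ) (n : ℕ) (x : List Bool) (b : Bool)
    (hx : x.length = n) :
    sseq φ u (n+1) = x ++ [b] ↔ sseq φ u n = x ∧ bitC φ x u = b := by
  constructor
  · intro h
    rw [sseq] at h
    obtain ⟨h1, h2⟩ := List.append_inj h (by simp [hx])
    simp only [List.cons.injEq, and_true] at h2
    subst h1
    exact ⟨rfl, h2⟩
  · rintro ⟨h1, h2⟩
    rw [sseq, h1, h2]

lemma measurable_sseq_eq (φ : ForecastingSystem) (x : List Bool) :
    MeasurableSet {u : ℝ | sseq φ u x.length = x} := by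
  induction x using List.reverseRecOn with
  | nil =>
    have : {u : ℝ | sseq φ u ([] : List Bool).length = []} = Set.univ := by
      ext u; simp [sseq]
    rw [this]; exact MeasurableSet.univ
  | append_singleton y b ih =>
    have : {u : ℝ | sseq φ u (y ++ [b]).length = y ++ [b]}
        = {u : ℝ | sseq φ u y.length = y} ∩ {u : ℝ | bitC φ y u = b} := by
      ext u
      have hl : (y ++ [b]).length = y.length + 1 := by simp
      rw [Set.mem_setOf_eq, hl, sseq_succ_eq_iff φ u y.length y b rfl]
      simp
    rw [this]
    apply MeasurableSet.inter ih
    rcases b with _ | _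
    · have : {u : ℝ | bitC φ y u = false} = {u : ℝ | u < aL φ y + lenR φ (y ++ [false])} := by
        ext u; simp [bitC]
      rw [this]; exact measurableSet_Iio
    · have : {u : ℝ | bitC φ y u = true} = {u : ℝ | aL φ y + lenR φ (y ++ [false]) ≤ u} := by
        ext u; simp [bitC]
      rw [this]; exact measurableSet_Ici

lemma measurable_FF (φ : ForecastingSystem) : Measurable (FF φ) := by
  rw [measurable_pi_iff]
  intro n
  apply measurable_to_countable
  intro y
  have key : ∀ b : Bool, MeasurableSet {u : ℝ | FF φ u n = b} := by
    intro b
    have : {u : ℝ | FF φ u n = b} = ⋃ x ∈ allBin n,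
        ({u : ℝ | sseq φ u x.length = x} ∩ {u : ℝ | bitC φ x u = b}) := by
      ext u
      simp only [Set.mem_setOf_eq, Set.mem_iUnion, Set.mem_inter_iff, exists_prop]
      constructor
      · intro h
        exact ⟨sseq φ u n, mem_allBin.2 (length_sseq φ u n), by rw [length_sseq], h⟩
      · rintro ⟨x, hx, h1, h2⟩
        have hxl : x.length = n := mem_allBin.1 hx
        rw [hxl] at h1
        rw [FF, h1, h2]
    rw [this]
    exact MeasurableSet.biUnion (Finset.countable_toSet _)
      (fun x _ => (measurable_sseq_eq φ x).inter (by
        rcases b with _ | _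
        · have : {u : ℝ | bitC φ x u = false} = {u : ℝ | u < aL φ x + lenR φ (x ++ [false])} := by
            ext u; simp [bitC]
          rw [this]; exact measurableSet_Iio
        · have : {u : ℝ | bitC φ x u = true} = {u : ℝ | aL φ x + lenR φ (x ++ [false]) ≤ u} := by
            ext u; simp [bitC]
          rw [this]; exact measurableSet_Ici))
  exact key (FF φ y n)

lemma sseq_interval (φ : ForecastingSystem) (x : List Bool) :
    {u : ℝ | sseq φ u x.length = x} ∩ Set.Ico (0:ℝ) 1
      = Set.Ico (aL φ x) (aL φ x + lenR φ x) ∩ Set.Ico (0:ℝ) 1 := by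
  induction x using List.reverseRecOn with
  | nil =>
    ext u
    simp [sseq, Set.mem_Ico]
  | append_singleton y b ih =>
    ext u
    have hl : (y ++ [b]).length = y.length + 1 := by simp
    simp only [Set.mem_inter_iff, Set.mem_setOf_eq, Set.mem_Ico, hl] at *
    rw [sseq_succ_eq_iff φ u y.length y b rfl]
    have ihu := Set.ext_iff.1 ih u
    simp only [Set.mem_inter_iff, Set.mem_setOf_eq, Set.mem_Ico] at ihu
    have hsplit := lenR_split φ y
    have h0 := lenR_nonneg φ (y ++ [false])
    have h1 := lenR_nonneg φ (y ++ [true])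
    rcases b with _ | _
    · have haL : aL φ (y ++ [false]) = aL φ y := by rw [aL_snoc]; simp
      constructor
      · rintro ⟨⟨hs, hb⟩, hu⟩
        have := (ihu.1 ⟨hs, hu⟩)
        simp only [bitC, decide_eq_false_iff_not, not_le] at hb
        refine ⟨⟨by rw [haL]; exact this.1.1, by rw [haL]; exact hb⟩, hu⟩
      · rintro ⟨⟨ha, hb⟩, hu⟩
        rw [haL] at ha hb
        have hm : aL φ y ≤ u ∧ u < aL φ y + lenR φ y := by
          constructor
          · exact ha
          · calc u < aL φ y + lenR φ (y ++ [false]) := hb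
              _ ≤ aL φ y + lenR φ y := by rw [hsplit]; linarith
        have := (ihu.2 ⟨hm, hu⟩)
        refine ⟨⟨this.1, ?_⟩, hu⟩
        simp only [bitC, decide_eq_false_iff_not, not_le]
        exact hb
    · have haL : aL φ (y ++ [true]) = aL φ y + lenR φ (y ++ [false]) := by
        rw [aL_snoc]; simp
      constructor
      · rintro ⟨⟨hs, hb⟩, hu⟩
        have := (ihu.1 ⟨hs, hu⟩)
        simp only [bitC, decide_eq_true_eq] at hb
        refine ⟨⟨by rw [haL]; exact hb, ?_⟩, hu⟩
        rw [haL]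
        have h2 := this.1.2
        rw [hsplit] at h2
        linarith
      · rintro ⟨⟨ha, hb⟩, hu⟩
        rw [haL] at ha hb
        have hm : aL φ y ≤ u ∧ u < aL φ y + lenR φ y := by
          constructor
          · linarith
          · rw [hsplit]; linarith
        have := (ihu.2 ⟨hm, hu⟩)
        refine ⟨⟨this.1, ?_⟩, hu⟩
        simp only [bitC, decide_eq_true_eq]
        exact ha

lemma interval_subset (φ : ForecastingSystem) (x : List Bool) :
    0 ≤ aL φ x ∧ aL φ x + lenR φ x ≤ 1 := by
  induction x using List.reverseRecOn with
  | nil => simp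
  | append_singleton y b ih =>
    have hsplit := lenR_split φ y
    have h0 := lenR_nonneg φ (y ++ [false])
    have h1 := lenR_nonneg φ (y ++ [true])
    rcases b with _ | _
    · have haL : aL φ (y ++ [false]) = aL φ y := by rw [aL_snoc]; simp
      exact ⟨by rw [haL]; exact ih.1, by rw [haL]; linarith [ih.2]⟩
    · have haL : aL φ (y ++ [true]) = aL φ y + lenR φ (y ++ [false]) := by
        rw [aL_snoc]; simp
      refine ⟨by rw [haL]; linarith [ih.1], by rw [haL]; linarith [ih.2]⟩

def fmMeasure (φ : ForecastingSystem) : Measure BinSeq :=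
  Measure.map (FF φ) (volume.restrict (Set.Ico (0:ℝ) 1))

lemma fmMeasure_cyl (φ : ForecastingSystem) (x : List Bool) :
    fmMeasure φ (cyl x) = P φ x := by
  rw [fmMeasure, Measure.map_apply (measurable_FF φ) (measurableSet_cyl x),
    Measure.restrict_apply']
  · have hpre : FF φ ⁻¹' cyl x = {u : ℝ | sseq φ u x.length = x} := by
      ext u
      simp only [Set.mem_preimage, cyl, Set.mem_setOf_eq, bprefix_FF]
    rw [hpre, sseq_interval]
    have hsub : Set.Ico (aL φ x) (aL φ x + lenR φ x) ⊆ Set.Ico (0:ℝ) 1 := by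
      obtain ⟨ha, hb⟩ := interval_subset φ x
      intro u hu
      simp only [Set.mem_Ico] at *
      constructor <;> [linarith [hu.1]; linarith [hu.2]]
    rw [Set.inter_eq_left.mpr hsub, Real.volume_Ico]
    have : aL φ x + lenR φ x - aL φ x = lenR φ x := by ring
    rw [this, lenR, ENNReal.ofReal_toReal (P_ne_top φ x)]
  · exact measurableSet_Ico

lemma isForecastMeasure_fmMeasure (φ : ForecastingSystem) :
    IsForecastMeasure φ (fmMeasure φ) := by
  constructor
  · constructor
    have : (Set.univ : Set BinSeq) = cyl [] := cyl_nil.symm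
    rw [this, fmMeasure_cyl]
    simp
  · intro x
    rw [fmMeasure_cyl, fmMeasure_cyl, P_snoc]
    simp [pstep, mul_comm]

/-! ### near-optimal forecasting systems -/

lemma exists_le_brk (K : Set PreqInf) (N k : ℕ) (x : PreqFin) {δ : ℝ≥0∞} (hδ : δ ≠ 0) :
    ∃ p : unitInterval, w K N (k+1) x ≤ brk (w K N k) x p + δ := by
  by_cases h0 : w K N (k+1) x = 0
  · exact ⟨⟨0, by norm_num, by norm_num⟩, by rw [h0]; exact zero_le⟩
  · have hlt : w K N (k+1) x - δ < w K N (k+1) x :=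
      ENNReal.sub_lt_self (w_ne_top K N (k+1) x) h0 hδ
    have : w K N (k+1) x - δ < ⨆ p : unitInterval, brk (w K N k) x p := by
      rw [← w]; exact hlt
    obtain ⟨p, hp⟩ := lt_iSup_iff.1 this
    exact ⟨p, by
      rw [← tsub_le_iff_right]
      exact hp.le⟩

def goPath (q : PreqFin → unitInterval) : PreqFin → List Bool → PreqFin
  | cur, [] => cur
  | cur, b :: rest => goPath q (cur ++ [(q cur, b)]) rest

def pathOf (q : PreqFin → unitInterval) (x : List Bool) : PreqFin := goPath q [] x

def phiOf (q : PreqFin → unitInterval) : ForecastingSystem := fun x => q (pathOf q x)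

lemma goPath_snoc (q : PreqFin → unitInterval) (x : List Bool) :
    ∀ (cur : PreqFin) (b : Bool),
      goPath q cur (x ++ [b]) = goPath q cur x ++ [(q (goPath q cur x), b)] := by
  induction x with
  | nil => intro cur b; rfl
  | cons c rest ih =>
    intro cur b
    show goPath q (cur ++ [(q cur, c)]) (rest ++ [b]) = _
    rw [ih]
    rfl

lemma pathOf_snoc (q : PreqFin → unitInterval) (x : List Bool) (b : Bool) :
    pathOf q (x ++ [b]) = pathOf q x ++ [(q (pathOf q x), b)] := goPath_snoc q x [] b

@[simp] lemma pathOf_nil (q : PreqFin → unitInterval) : pathOf q [] = [] := rfl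

lemma length_pathOf (q : PreqFin → unitInterval) (x : List Bool) :
    (pathOf q x).length = x.length := by
  induction x using List.reverseRecOn with
  | nil => rfl
  | append_singleton y b ih => rw [pathOf_snoc]; simp [ih]

lemma preq_phiOf (q : PreqFin → unitInterval) (x : List Bool) :
    preq (phiOf q) x = pathOf q x := by
  induction x using List.reverseRecOn with
  | nil => simp
  | append_singleton y b ih =>
    rw [preq_snoc, pathOf_snoc, ih]
    rfl

lemma sum_P_eq_one (φ : ForecastingSystem) (n : ℕ) :
    ∑ x ∈ allBin n, P φ x = 1 := by
  induction n with
  | zero => simp [allBin]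
  | succ n ih =>
    rw [sum_split, ← ih]
    exact Finset.sum_congr rfl fun x _ => (P_split φ x).symm

def gsum (K : Set PreqInf) (N : ℕ) (φ : ForecastingSystem) : ℝ≥0∞ :=
  ∑ x ∈ allBin N, P φ x * termInd K N (preq φ x)

lemma exists_phi_opt (K : Set PreqInf) (N : ℕ) {δ : ℝ≥0∞} (hδ : δ ≠ 0) :
    ∃ φ : ForecastingSystem, w K N N [] ≤ gsum K N φ + N * δ := by
  -- choose a nearly optimal forecast at every node
  have hex : ∀ y : PreqFin, ∃ p : unitInterval,
      y.length < N → w K N (N - y.length) y ≤ brk (w K N (N - y.length - 1)) y p + δ := by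
    intro y
    by_cases h : y.length < N
    · have hk : N - y.length = (N - y.length - 1) + 1 := by omega
      obtain ⟨p, hp⟩ := exists_le_brk K N (N - y.length - 1) y hδ
      exact ⟨p, fun _ => by rw [hk]; exact hp⟩
    · exact ⟨⟨0, by norm_num, by norm_num⟩, fun hc => absurd hc h⟩
  choose q hq using hex
  refine ⟨phiOf q, ?_⟩
  -- conservation of value with error accumulation
  have key : ∀ n, n ≤ N →
      w K N N [] ≤ ∑ x ∈ allBin n, P (phiOf q) x * w K N (N - n) (pathOf q x) + n * δ := by
    intro n
    induction n with
    | zero =>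
      intro _
      simp [allBin]
    | succ n ih =>
      intro hn
      have hn' : n ≤ N := by omega
      have hnN : n < N := by omega
      refine le_trans (ih hn') ?_
      have step : ∑ x ∈ allBin n, P (phiOf q) x * w K N (N - n) (pathOf q x)
          ≤ ∑ x ∈ allBin (n+1), P (phiOf q) x * w K N (N - (n+1)) (pathOf q x) + δ := by
        rw [sum_split]
        have expand : ∀ x ∈ allBin n,
            P (phiOf q) x * w K N (N - n) (pathOf q x)
            ≤ (P (phiOf q) (x ++ [false]) * w K N (N - (n+1)) (pathOf q (x ++ [false]))
              + P (phiOf q) (x ++ [true]) * w K N (N - (n+1)) (pathOf q (x ++ [true])))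
              + P (phiOf q) x * δ := by
          intro x hx
          have hxl : x.length = n := mem_allBin.1 hx
          have hpl : (pathOf q x).length < N := by rw [length_pathOf, hxl]; exact hnN
          have hbound := hq (pathOf q x) hpl
          rw [length_pathOf, hxl] at hbound
          calc P (phiOf q) x * w K N (N - n) (pathOf q x)
              ≤ P (phiOf q) x * (brk (w K N (N - n - 1)) (pathOf q x) (q (pathOf q x)) + δ) :=
                mul_le_mul_right hbound _
            _ = P (phiOf q) x * brk (w K N (N - n - 1)) (pathOf q x) (q (pathOf q x))
                + P (phiOf q) x * δ := by rw [mul_add]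
            _ = (P (phiOf q) (x ++ [false]) * w K N (N - (n+1)) (pathOf q (x ++ [false]))
                + P (phiOf q) (x ++ [true]) * w K N (N - (n+1)) (pathOf q (x ++ [true])))
                + P (phiOf q) x * δ := by
                congr 1
                rw [brk, mul_add, P_snoc, P_snoc, pathOf_snoc, pathOf_snoc]
                have hphi : phiOf q x = q (pathOf q x) := rfl
                have hsub : N - n - 1 = N - (n + 1) := by omega
                rw [hsub]
                congr 1
                · rw [pstep, if_neg (by simp), hphi]
                  ring
                · rw [pstep, if_pos rfl, hphi]
                  ring
        calc ∑ x ∈ allBin n, P (phiOf q) x * w K N (N - n) (pathOf q x)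
            ≤ ∑ x ∈ allBin n,
                ((P (phiOf q) (x ++ [false]) * w K N (N - (n+1)) (pathOf q (x ++ [false]))
                + P (phiOf q) (x ++ [true]) * w K N (N - (n+1)) (pathOf q (x ++ [true])))
                + P (phiOf q) x * δ) := Finset.sum_le_sum expand
          _ = ∑ x ∈ allBin n,
                (P (phiOf q) (x ++ [false]) * w K N (N - (n+1)) (pathOf q (x ++ [false]))
                + P (phiOf q) (x ++ [true]) * w K N (N - (n+1)) (pathOf q (x ++ [true])))
                + (∑ x ∈ allBin n, P (phiOf q) x) * δ := by
                rw [Finset.sum_add_distrib, Finset.sum_mul]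
          _ = ∑ x ∈ allBin n,
                (P (phiOf q) (x ++ [false]) * w K N (N - (n+1)) (pathOf q (x ++ [false]))
                + P (phiOf q) (x ++ [true]) * w K N (N - (n+1)) (pathOf q (x ++ [true])))
                + δ := by rw [sum_P_eq_one, one_mul]
      calc ∑ x ∈ allBin n, P (phiOf q) x * w K N (N - n) (pathOf q x) + n * δ
          ≤ (∑ x ∈ allBin (n+1), P (phiOf q) x * w K N (N - (n+1)) (pathOf q x) + δ) + n * δ :=
            add_le_add_left step _
        _ = ∑ x ∈ allBin (n+1), P (phiOf q) x * w K N (N - (n+1)) (pathOf q x)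
              + ((n+1 : ℕ) : ℝ≥0∞) * δ := by
            push_cast
            ring
  have := key N (le_refl N)
  simp only [Nat.sub_self] at this
  refine le_trans this ?_
  apply add_le_add_left
  apply le_of_eq
  apply Finset.sum_congr rfl
  intro x _
  rw [w, preq_phiOf]

/-! ### the approximating events -/

def ASet (K : Set PreqInf) (M : ℕ) (φ : ForecastingSystem) : Set BinSeq :=
  {ω | ∃ π ∈ K, prefixn π M = preq φ (bprefix ω M)}

lemma cyl_disjoint {x y : List Bool} (hlen : x.length = y.length) (hxy : x ≠ y) :
    Disjoint (cyl x) (cyl y) := by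
  rw [Set.disjoint_iff]
  rintro ω ⟨h1, h2⟩
  have e1 : bprefix ω x.length = x := h1
  have e2 : bprefix ω y.length = y := h2
  rw [← hlen] at e2
  exact hxy (e1.symm.trans e2)

lemma ASet_eq (K : Set PreqInf) (M : ℕ) (φ : ForecastingSystem) :
    ASet K M φ = ⋃ x ∈ (allBin M).filter (fun x => ∃ π ∈ K, prefixn π M = preq φ x), cyl x := by
  ext ω
  simp only [ASet, Set.mem_setOf_eq, Set.mem_iUnion, Finset.mem_filter, exists_prop]
  constructor
  · rintro ⟨π, hπ, hpre⟩
    refine ⟨bprefix ω M, ⟨mem_allBin.2 (length_bprefix ω M), π, hπ, hpre⟩, ?_⟩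
    show bprefix ω (bprefix ω M).length = bprefix ω M
    rw [length_bprefix]
  · rintro ⟨x, ⟨hx, π, hπ, hpre⟩, hω⟩
    have hxl : x.length = M := mem_allBin.1 hx
    have hbx : bprefix ω M = x := by
      have : bprefix ω x.length = x := hω
      rwa [hxl] at this
    exact ⟨π, hπ, by rwa [hbx]⟩

lemma measurableSet_ASet (K : Set PreqInf) (M : ℕ) (φ : ForecastingSystem) :
    MeasurableSet (ASet K M φ) := by
  rw [ASet_eq]
  exact Finset.measurableSet_biUnion _ fun x _ => measurableSet_cyl x

lemma termInd_preq_iff (K : Set PreqInf) (M : ℕ) (φ : ForecastingSystem) {x : List Bool}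
    (hx : x.length = M) :
    termInd K M (preq φ x) = (if ∃ π ∈ K, prefixn π M = preq φ x then 1 else 0) := by
  rw [termInd, List.take_of_length_le (by rw [length_preq, hx])]

lemma fm_ASet {φ : ForecastingSystem} {μ : Measure BinSeq} (hm : IsForecastMeasure φ μ)
    (K : Set PreqInf) (M : ℕ) : μ (ASet K M φ) = gsum K M φ := by
  rw [ASet_eq]
  rw [measure_biUnion_finset]
  · rw [gsum]
    rw [Finset.sum_congr rfl (fun x hx => show P φ x * termInd K M (preq φ x)
        = if ∃ π ∈ K, prefixn π M = preq φ x then P φ x else 0 by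
      rw [termInd_preq_iff K M φ (mem_allBin.1 hx)]
      split_ifs <;> simp)]
    rw [← Finset.sum_filter]
    exact Finset.sum_congr rfl fun x hx => fm_cyl_eq_P hm x
  · intro x hx y hy hxy
    simp only [Finset.coe_filter, Set.mem_setOf_eq] at hx hy
    exact cyl_disjoint (by rw [mem_allBin.1 hx.1, mem_allBin.1 hy.1]) hxy
  · exact fun x _ => measurableSet_cyl x

lemma ASet_antitone (K : Set PreqInf) (φ : ForecastingSystem) {M M' : ℕ} (h : M ≤ M') :
    ASet K M' φ ⊆ ASet K M φ := by
  rintro ω ⟨π, hπ, hpre⟩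
  refine ⟨π, hπ, ?_⟩
  have := congrArg (List.take M) hpre
  rwa [take_prefixn π h, take_preq φ _ M (by rw [length_bprefix]; exact h),
    take_bprefix ω h] at this

lemma iInter_ASet_subset {K : Set PreqInf} (hK : IsCompact K) (φ : ForecastingSystem) :
    (⋂ M, ASet K M φ) ⊆ {ω | seqPhi φ ω ∈ K} := by
  intro ω hω
  simp only [Set.mem_iInter] at hω
  choose πs hπs hpre using hω
  have hclosed : IsClosed K := hK.isClosed
  have htend : Filter.Tendsto πs Filter.atTop (𝓝 (seqPhi φ ω)) := by
    rw [tendsto_pi_nhds]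
    intro i
    apply Filter.Tendsto.congr' (f₁ := fun _ => seqPhi φ ω i)
    · filter_upwards [Filter.eventually_gt_atTop i] with M hM
      have h1 : prefixn (πs M) M = prefixn (seqPhi φ ω) M := by
        rw [hpre M, preq_bprefix]
      have h2 := congrArg (fun l => l.getD i (seqPhi φ ω 0)) h1
      rw [List.getD_eq_getElem _ _ (by rw [length_prefixn]; exact hM),
        List.getD_eq_getElem _ _ (by rw [length_prefixn]; exact hM),
        getElem_prefixn, getElem_prefixn] at h2
      exact h2.symm
    · exact tendsto_const_nhds
  exact hclosed.mem_of_tendsto htend (Filter.Eventually.of_forall hπs)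

/-! ### continuity of P in φ -/

def rP (φ : ForecastingSystem) (x : List Bool) : ℝ :=
  ∏ i ∈ Finset.range x.length,
    (if x.getD i false then (φ (x.take i) : ℝ) else 1 - (φ (x.take i) : ℝ))

lemma P_eq_ofReal_rP (φ : ForecastingSystem) (x : List Bool) :
    P φ x = ENNReal.ofReal (rP φ x) := by
  rw [P, rP, ENNReal.ofReal_prod_of_nonneg]
  · apply Finset.prod_congr rfl
    intro i _
    rw [pstep]
    split_ifs <;> rfl
  · intro i _
    split_ifs with h
    · exact (φ (x.take i)).2.1
    · linarith [(φ (x.take i)).2.2]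

/-! ### the limit argument -/

lemma termInd_eq_one_iff (K : Set PreqInf) (M : ℕ) (ψ : ForecastingSystem) {x : List Bool}
    (hx : x.length = M) :
    termInd K M (preq ψ x) = 1 ↔
      (fun i : Fin M => ((ψ (x.take (i : ℕ))), x.getD i false))
        ∈ (fun π : PreqInf => fun i : Fin M => π (i : ℕ)) '' K := by
  have key : (∃ π ∈ K, prefixn π M = preq ψ x) ↔
      (fun i : Fin M => ((ψ (x.take (i : ℕ))), x.getD i false))
        ∈ (fun π : PreqInf => fun i : Fin M => π (i : ℕ)) '' K := by
    constructor
    · rintro ⟨π, hπ, hpre⟩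
      refine ⟨π, hπ, funext fun i => ?_⟩
      have hi : (i : ℕ) < (prefixn π M).length := by rw [length_prefixn]; exact i.2
      have h2 : (prefixn π M)[(i:ℕ)] = (preq ψ x)[(i:ℕ)]'(by rw [← hpre]; exact hi) :=
        List.getElem_of_eq hpre hi
      rw [getElem_prefixn] at h2
      have h3 : (preq ψ x)[(i:ℕ)]'(by rw [length_preq, hx]; exact i.2)
          = (ψ (x.take (i:ℕ)), x[(i:ℕ)]'(by rw [hx]; exact i.2)) := by
        simp [preq]
      rw [h3] at h2
      show π (i : ℕ) = _
      rw [h2, List.getD_eq_getElem x false (by rw [hx]; exact i.2)]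
    · rintro ⟨π, hπ, hfun⟩
      refine ⟨π, hπ, ?_⟩
      apply List.ext_getElem (by rw [length_prefixn, length_preq, hx])
      intro i h1 h2
      have hiM : i < M := by rwa [length_prefixn] at h1
      have := congrFun hfun ⟨i, hiM⟩
      simp only at this
      rw [getElem_prefixn, this]
      have hix : i < x.length := by rw [hx]; exact hiM
      have h3 : (preq ψ x)[i]'h2 = (ψ (x.take i), x[i]'hix) := by simp [preq]
      rw [h3, List.getD_eq_getElem x false hix]
  constructor
  · intro h1
    rw [termInd_preq_iff K M ψ hx] at h1
    split_ifs at h1 with h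
    · exact key.1 h
    · exact absurd h1 (by norm_num)
  · intro h2
    rw [termInd_preq_iff K M ψ hx, if_pos (key.2 h2)]

lemma le_gsum_limit {K : Set PreqInf} (hK : IsCompact K) (M : ℕ)
    (φs : ℕ → ForecastingSystem) (φstar : ForecastingSystem)
    (htend : Filter.Tendsto φs Filter.atTop (𝓝 φstar))
    {c C : ℝ≥0∞} (hc : ∀ᶠ j in Filter.atTop, c ≤ gsum K M (φs j) + C) :
    c ≤ gsum K M φstar + C := by
  have hpoint : ∀ y : List Bool,
      Filter.Tendsto (fun j => ((φs j y : ℝ))) Filter.atTop (𝓝 (φstar y : ℝ)) := by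
    intro y
    exact (continuous_subtype_val.tendsto _).comp (tendsto_pi_nhds.1 htend y)
  have hrP : ∀ x : List Bool,
      Filter.Tendsto (fun j => rP (φs j) x) Filter.atTop (𝓝 (rP φstar x)) := by
    intro x
    apply tendsto_finset_prod
    intro i _
    cases hgd : x.getD i false
    · simpa [rP, hgd] using (tendsto_const_nhds.sub (hpoint (x.take i)))
    · simpa [rP, hgd] using hpoint (x.take i)
  have hP : ∀ x : List Bool,
      Filter.Tendsto (fun j => P (φs j) x) Filter.atTop (𝓝 (P φstar x)) := by
    intro x
    simp only [P_eq_ofReal_rP]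
    exact (ENNReal.continuous_ofReal.tendsto _).comp (hrP x)
  apply ENNReal.le_of_forall_pos_le_add
  intro ε2 hε2 _
  set B : ℝ≥0∞ := (((allBin M).card + 1 : ℕ) : ℝ≥0∞) with hB
  have hB0 : B ≠ 0 := by simp [hB]
  have hBt : B ≠ ∞ := by simp [hB]
  set ε3 : ℝ≥0∞ := (ε2 : ℝ≥0∞) / B with hε3def
  have hε3 : ε3 ≠ 0 :=
    (ENNReal.div_pos (by exact_mod_cast hε2.ne') hBt).ne'
  have hterm : ∀ x ∈ allBin M, ∀ᶠ j in Filter.atTop,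
      P (φs j) x * termInd K M (preq (φs j) x)
        ≤ P φstar x * termInd K M (preq φstar x) + ε3 := by
    intro x hx
    have hxl := mem_allBin.1 hx
    by_cases hstar : termInd K M (preq φstar x) = 1
    · have hlt : P φstar x < P φstar x * termInd K M (preq φstar x) + ε3 := by
        rw [hstar, mul_one]
        exact ENNReal.lt_add_right (P_ne_top _ _) hε3
      filter_upwards [(hP x).eventually_le_const hlt] with j hj
      calc P (φs j) x * termInd K M (preq (φs j) x) ≤ P (φs j) x * 1 :=
            mul_le_mul_right (termInd_le_one K M _) _
        _ = P (φs j) x := mul_one _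
        _ ≤ _ := hj
    · have hCimg : IsClosed ((fun π : PreqInf => fun i : Fin M => π (i : ℕ)) '' K) :=
        (hK.image (continuous_pi fun i => continuous_apply _)).isClosed
      have hnotmem : (fun i : Fin M => ((φstar (x.take (i : ℕ))), x.getD i false))
          ∉ (fun π : PreqInf => fun i : Fin M => π (i : ℕ)) '' K := by
        intro hmem
        exact hstar ((termInd_eq_one_iff K M φstar hxl).2 hmem)
      have htendF : Filter.Tendsto
          (fun j => fun i : Fin M => ((φs j (x.take (i : ℕ))), x.getD i false))
          Filter.atTop (𝓝 (fun i : Fin M => ((φstar (x.take (i : ℕ))), x.getD i false))) := by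
        rw [tendsto_pi_nhds]
        intro i
        exact ((tendsto_pi_nhds.1 htend _).prodMk_nhds tendsto_const_nhds)
      have hev := htendF.eventually_mem (hCimg.isOpen_compl.mem_nhds hnotmem)
      filter_upwards [hev] with j hj
      have hzero : termInd K M (preq (φs j) x) = 0 := by
        by_contra hne
        have h1 : termInd K M (preq (φs j) x) = 1 := by
          rw [termInd] at hne ⊢
          split_ifs at hne ⊢ with h
          · rfl
          · exact absurd rfl hne
        exact hj ((termInd_eq_one_iff K M (φs j) hxl).1 h1)
      rw [hzero, mul_zero]
      exact zero_le
  have hev2 : ∀ᶠ j in Filter.atTop, gsum K M (φs j) ≤ gsum K M φstar + ε2 := by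
    filter_upwards [(Finset.eventually_all (allBin M)).2 hterm] with j hj
    calc gsum K M (φs j)
        ≤ ∑ x ∈ allBin M, (P φstar x * termInd K M (preq φstar x) + ε3) :=
          Finset.sum_le_sum hj
      _ = gsum K M φstar + (allBin M).card • ε3 := by
          rw [Finset.sum_add_distrib, Finset.sum_const, gsum]
      _ ≤ gsum K M φstar + ε2 := by
          apply add_le_add_right
          rw [nsmul_eq_mul]
          calc ((allBin M).card : ℝ≥0∞) * ε3 ≤ B * ε3 := by
                apply mul_le_mul_left
                rw [hB]
                exact_mod_cast Nat.le_succ _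
            _ = ε2 := by rw [hε3def]; exact ENNReal.mul_div_cancel hB0 hBt
  obtain ⟨j, hj1, hj2⟩ := (hc.and hev2).exists
  calc c ≤ gsum K M (φs j) + C := hj1
    _ ≤ (gsum K M φstar + ε2) + C := add_le_add_left hj2 _
    _ = gsum K M φstar + C + ε2 := by ring

lemma iInf_w_le_upProbMeas {K : Set PreqInf} (hK : IsCompact K) :
    (⨅ N, w K N N []) ≤ UpProbMeas K := by
  apply ENNReal.le_of_forall_pos_le_add
  intro ε hε _
  set c := ⨅ N, w K N N [] with hc
  set εh : ℝ≥0∞ := (ε : ℝ≥0∞) / 2 with hεhdef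
  have hεh : εh ≠ 0 := (ENNReal.div_pos (by exact_mod_cast hε.ne') (by norm_num)).ne'
  have hex : ∀ N : ℕ, ∃ φ : ForecastingSystem, w K N N [] ≤ gsum K N φ + εh := by
    intro N
    have hNt : ((N : ℝ≥0∞) + 1) ≠ ∞ := by
      simp
    have hδ : (εh / ((N : ℝ≥0∞) + 1)) ≠ 0 := (ENNReal.div_pos hεh hNt).ne'
    obtain ⟨φ, hφ⟩ := exists_phi_opt K N hδ
    refine ⟨φ, le_trans hφ (add_le_add_right ?_ _)⟩
    calc (N : ℝ≥0∞) * (εh / ((N : ℝ≥0∞) + 1))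
        ≤ ((N : ℝ≥0∞) + 1) * (εh / ((N : ℝ≥0∞) + 1)) :=
          mul_le_mul_left le_self_add _
      _ = εh := ENNReal.mul_div_cancel (by simp) hNt
  choose φN hφN using hex
  obtain ⟨φstar, -, r, hr, htend⟩ :=
    isCompact_univ.tendsto_subseq (x := φN) (fun N => Set.mem_univ _)
  have hμ := isForecastMeasure_fmMeasure φstar
  haveI : IsProbabilityMeasure (fmMeasure φstar) := hμ.1
  have hM : ∀ M : ℕ, c ≤ fmMeasure φstar (ASet K M φstar) + εh := by
    intro M
    rw [fm_ASet hμ K M]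
    apply le_gsum_limit hK M _ _ htend
    filter_upwards [Filter.eventually_ge_atTop M] with j hj
    have hrj : M ≤ r j := le_trans hj hr.le_apply
    have h1 : c ≤ gsum K (r j) (φN (r j)) + εh :=
      le_trans (iInf_le _ (r j)) (hφN (r j))
    have h2 : gsum K (r j) (φN (r j)) ≤ gsum K M (φN (r j)) := by
      rw [← fm_ASet (isForecastMeasure_fmMeasure (φN (r j))) K (r j),
        ← fm_ASet (isForecastMeasure_fmMeasure (φN (r j))) K M]
      exact measure_mono (ASet_antitone K _ hrj)
    exact le_trans h1 (add_le_add_left h2 _)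
  have hInter : fmMeasure φstar (⋂ M, ASet K M φstar)
      = ⨅ M, fmMeasure φstar (ASet K M φstar) := by
    apply Directed.measure_iInter
    · exact fun M => (measurableSet_ASet K M φstar).nullMeasurableSet
    · exact Antitone.directed_ge fun M M' h => ASet_antitone K φstar h
    · exact ⟨0, measure_ne_top _ _⟩
  have hkey : c ≤ fmMeasure φstar (⋂ M, ASet K M φstar) + εh := by
    rw [hInter, ENNReal.iInf_add]
    exact le_iInf fun M => hM M
  have hfinal : fmMeasure φstar (⋂ M, ASet K M φstar) ≤ UpProbMeas K := by
    refine le_trans (measure_mono (iInter_ASet_subset hK φstar)) ?_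
    exact le_iSup_of_le φstar (le_iSup_of_le (fmMeasure φstar)
      (le_iSup_of_le hμ (le_refl _)))
  calc c ≤ fmMeasure φstar (⋂ M, ASet K M φstar) + εh := hkey
    _ ≤ UpProbMeas K + εh := add_le_add_left hfinal _
    _ ≤ UpProbMeas K + ε := add_le_add_right (by rw [hεhdef]; exact ENNReal.half_le_self) _

end PreqProof

/-- For every compact subset K of the prequential space Π, upper game-theoretic
probability equals upper measure-theoretic probability. -/
theorem upProb_eq_upProbMeas_of_compact (K : Set PreqInf) (hK : IsCompact K) :
    UpProb K = UpProbMeas K := by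
  apply le_antisymm
  · refine le_trans (le_iInf fun N => ?_) (PreqProof.iInf_w_le_upProbMeas hK)
    simpa using PreqProof.upProb_le_w K N 0
  · exact PreqProof.upProbMeas_le_upProb K
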